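/- Let p ≥ q + 2 with q ≥ 1, let λ_1 ≥ λ_2 ≥ ... ≥ λ_q > 0 and λ_{q+1} = ... = λ_p = 0, and set s_j = λ_j/(1 + λ_j). For each n ∈ ℕ let λ̂_1(n), ..., λ̂_p(n) ≥ 0 satisfy |λ̂_j(n) − λ_j| ≤ K·n^{−1/2} for all n and all 1 ≤ j ≤ p, for some constant K. Let c₁(n) > 0 with c₁(n) → 0 and n·c₁(n) → ∞, and set ŝ_j(n) = λ̂_j(n)/(1 + λ̂_j(n)) and ŝ*_j(n) = (ŝ_j(n)² + c₁(n))/(ŝ_{j+1}(n)² + c₁(n)) − 1 for 1 ≤ j ≤ p − 1. Then as n → ∞: (i) for each 1 ≤ j ≤ q − 1, ŝ*_j(n) → s_j²/s_{j+1}² − 1; (ii) ŝ*_q(n) → +∞; (iii) for each q + 1 ≤ j ≤ p − 1, ŝ*_j(n) → 0. -/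

import Mathlib

open Filter

/-- `ŝ_j = λ̂_j / (1 + λ̂_j)`. -/
noncomputable def sHat (lam : ℕ → ℝ) (j : ℕ) : ℝ := lam j / (1 + lam j)

/-- First-round ridge ratio `ŝ*_j = (ŝ_j² + c₁)/(ŝ_{j+1}² + c₁) − 1`. -/
noncomputable def sStar (lam : ℕ → ℝ) (c1 : ℝ) (j : ℕ) : ℝ :=
  ((sHat lam j) ^ 2 + c1) / ((sHat lam (j + 1)) ^ 2 + c1) - 1

/-- Limits of the first-round ridge ratios.  With population eigenvalues
`λ_1 ≥ ... ≥ λ_q > 0 = λ_{q+1} = ... = λ_p`, estimates `λ̂_j(n) ≥ 0` satisfying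
`|λ̂_j(n) − λ_j| ≤ K·n^{−1/2}`, and a ridge `c₁(n) → 0` with `n·c₁(n) → ∞`:
(i) for `1 ≤ j ≤ q − 1`, `ŝ*_j(n) → s_j²/s_{j+1}² − 1`;
(ii) `ŝ*_q(n) → +∞`;
(iii) for `q + 1 ≤ j ≤ p − 1`, `ŝ*_j(n) → 0`. -/
theorem sStar_limits (p q : ℕ) (hq : 1 ≤ q) (hpq : q + 2 ≤ p)
    (lam : ℕ → ℝ)
    (hdec : ∀ i j, 1 ≤ i → i ≤ j → j ≤ q → lam j ≤ lam i)
    (hpos : 0 < lam q)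
    (hzero : ∀ j, q < j → j ≤ p → lam j = 0)
    (lamhat : ℕ → ℕ → ℝ)
    (hnn : ∀ n j, 1 ≤ j → j ≤ p → 0 ≤ lamhat n j)
    (K : ℝ)
    (hrate : ∀ n, 1 ≤ n → ∀ j, 1 ≤ j → j ≤ p → |lamhat n j - lam j| ≤ K / Real.sqrt n)
    (c1 : ℕ → ℝ) (hc1pos : ∀ n, 0 < c1 n)
    (hc1 : Tendsto c1 atTop (nhds 0))
    (hnc1 : Tendsto (fun n : ℕ => (n : ℝ) * c1 n) atTop atTop) :
    (∀ j, 1 ≤ j → j ≤ q - 1 →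
      Tendsto (fun n => sStar (lamhat n) (c1 n) j) atTop
        (nhds ((sHat lam j) ^ 2 / (sHat lam (j + 1)) ^ 2 - 1))) ∧
    Tendsto (fun n => sStar (lamhat n) (c1 n) q) atTop atTop ∧
    (∀ j, q + 1 ≤ j → j ≤ p - 1 →
      Tendsto (fun n => sStar (lamhat n) (c1 n) j) atTop (nhds 0)) := by
  -- basic facts
  have hsqrtTop : Tendsto (fun n : ℕ => Real.sqrt n) atTop atTop := by
    have h1 : Tendsto Real.sqrt atTop atTop := by
      apply tendsto_atTop_atTop_of_monotone (fun a b h => Real.sqrt_le_sqrt h)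
      intro b
      exact ⟨(max 0 b) ^ 2, by rw [Real.sqrt_sq (le_max_left 0 b)]; exact le_max_right 0 b⟩
    exact h1.comp tendsto_natCast_atTop_atTop
  have hKsqrt : Tendsto (fun n : ℕ => K / Real.sqrt n) atTop (nhds 0) :=
    tendsto_const_nhds.div_atTop hsqrtTop
  have hlamnn : ∀ j, 1 ≤ j → j ≤ p → 0 ≤ lam j := by
    intro j h1 h2
    by_cases h : j ≤ q
    · exact le_trans hpos.le (hdec j q h1 h le_rfl)
    · rw [hzero j (by omega) h2]
  have hconv : ∀ j, 1 ≤ j → j ≤ p →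
      Tendsto (fun n => lamhat n j) atTop (nhds (lam j)) := by
    intro j h1 h2
    have hd : Tendsto (fun n => lamhat n j - lam j) atTop (nhds 0) := by
      apply squeeze_zero_norm' _ hKsqrt
      filter_upwards [eventually_ge_atTop 1] with n hn
      exact hrate n hn j h1 h2
    have := hd.add (tendsto_const_nhds (x := lam j))
    simpa using this
  have hsconv : ∀ j, 1 ≤ j → j ≤ p →
      Tendsto (fun n => sHat (lamhat n) j) atTop (nhds (sHat lam j)) := by
    intro j h1 h2
    have hne : 1 + lam j ≠ 0 := by
      have := hlamnn j h1 h2; positivity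
    exact (hconv j h1 h2).div (tendsto_const_nhds.add (hconv j h1 h2)) hne
  -- small eigenvalue estimate bound: for j with lam j = 0
  have hsmall : ∀ n, 1 ≤ n → ∀ j, 1 ≤ j → j ≤ p → lam j = 0 →
      sHat (lamhat n) j ^ 2 ≤ K ^ 2 / n := by
    intro n hn j h1 h2 hz
    have hln : 0 ≤ lamhat n j := hnn n j h1 h2
    have hb : lamhat n j ≤ K / Real.sqrt n := by
      have := hrate n hn j h1 h2
      rw [hz, sub_zero, abs_of_nonneg hln] at this
      exact this
    have hsh : 0 ≤ sHat (lamhat n) j := by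
      unfold sHat; positivity
    have hsh2 : sHat (lamhat n) j ≤ lamhat n j := by
      unfold sHat
      rw [div_le_iff₀ (by positivity)]
      nlinarith
    have h3 : sHat (lamhat n) j ^ 2 ≤ (K / Real.sqrt n) ^ 2 := by
      apply pow_le_pow_left₀ hsh (le_trans hsh2 hb)
    calc sHat (lamhat n) j ^ 2 ≤ (K / Real.sqrt n) ^ 2 := h3
      _ = K ^ 2 / n := by
          rw [div_pow, Real.sq_sqrt (by positivity : (0:ℝ) ≤ (n:ℝ))]
  refine ⟨?_, ?_, ?_⟩
  · -- part (i)
    intro j h1 h2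
    have hj1 : j + 1 ≤ q := by omega
    have hjp : j ≤ p := by omega
    have hj1p : j + 1 ≤ p := by omega
    have hspos : 0 < sHat lam (j + 1) := by
      have hl : 0 < lam (j + 1) := lt_of_lt_of_le hpos (hdec (j+1) q (by omega) hj1 le_rfl)
      unfold sHat; positivity
    have hden : (sHat lam (j + 1)) ^ 2 + 0 ≠ 0 := by positivity
    have hnum : Tendsto (fun n => sHat (lamhat n) j ^ 2 + c1 n) atTop
        (nhds (sHat lam j ^ 2 + 0)) := ((hsconv j h1 hjp).pow 2).add hc1
    have hden' : Tendsto (fun n => sHat (lamhat n) (j+1) ^ 2 + c1 n) atTop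
        (nhds (sHat lam (j+1) ^ 2 + 0)) := ((hsconv (j+1) (by omega) hj1p).pow 2).add hc1
    have := (hnum.div hden' hden).sub (tendsto_const_nhds (x := (1:ℝ)))
    simpa [sStar] using this
  · -- part (ii)
    have hqp : q ≤ p := by omega
    have hq1p : q + 1 ≤ p := by omega
    have hz1 : lam (q + 1) = 0 := hzero (q+1) (by omega) hq1p
    have hs0 : sHat lam (q + 1) = 0 := by unfold sHat; rw [hz1]; simp
    have hden0 : Tendsto (fun n => sHat (lamhat n) (q+1) ^ 2 + c1 n) atTop
        (nhds 0) := by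
      have := ((hsconv (q+1) (by omega) hq1p).pow 2).add hc1
      rw [hs0] at this; simpa using this
    have hdenpos : ∀ n, 0 < sHat (lamhat n) (q+1) ^ 2 + c1 n := by
      intro n; have := hc1pos n; positivity
    have hdeninv : Tendsto (fun n => (sHat (lamhat n) (q+1) ^ 2 + c1 n)⁻¹) atTop atTop := by
      apply Tendsto.inv_tendsto_nhdsGT_zero
      rw [tendsto_nhdsWithin_iff]
      exact ⟨hden0, Eventually.of_forall fun n => hdenpos n⟩
    have hspos : 0 < sHat lam q := by unfold sHat; positivity
    have hnum : Tendsto (fun n => sHat (lamhat n) q ^ 2 + c1 n) atTop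
        (nhds (sHat lam q ^ 2 + 0)) := ((hsconv q hq hqp).pow 2).add hc1
    have hnum' : Tendsto (fun n => sHat (lamhat n) q ^ 2 + c1 n) atTop
        (nhds (sHat lam q ^ 2)) := by simpa using hnum
    have hmul := Tendsto.pos_mul_atTop (by positivity : (0:ℝ) < sHat lam q ^ 2) hnum' hdeninv
    have := tendsto_atTop_add_const_right atTop (-1 : ℝ) hmul
    apply this.congr
    intro n
    simp [sStar, div_eq_mul_inv, sub_eq_add_neg]
  · -- part (iii)
    intro j h1 h2
    have hjp : j ≤ p := by omega
    have hj1p : j + 1 ≤ p := by omega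
    have hzj : lam j = 0 := hzero j (by omega) hjp
    have hzj1 : lam (j+1) = 0 := hzero (j+1) (by omega) hj1p
    have hbound : Tendsto (fun n : ℕ => K ^ 2 / ((n : ℝ) * c1 n)) atTop (nhds 0) :=
      tendsto_const_nhds.div_atTop hnc1
    apply squeeze_zero_norm' _ hbound
    filter_upwards [eventually_ge_atTop 1] with n hn
    have ha := hsmall n hn j (by omega) hjp hzj
    have hb := hsmall n hn (j+1) (by omega) hj1p hzj1
    have ha0 : 0 ≤ sHat (lamhat n) j ^ 2 := sq_nonneg _
    have hb0 : 0 ≤ sHat (lamhat n) (j+1) ^ 2 := sq_nonneg _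
    have hcpos := hc1pos n
    have hnpos : (0:ℝ) < n := by exact_mod_cast hn
    have hdpos : 0 < sHat (lamhat n) (j+1) ^ 2 + c1 n := by positivity
    have heq : sStar (lamhat n) (c1 n) j =
        (sHat (lamhat n) j ^ 2 - sHat (lamhat n) (j+1) ^ 2) /
          (sHat (lamhat n) (j+1) ^ 2 + c1 n) := by
      unfold sStar
      field_simp
      ring
    rw [Real.norm_eq_abs, heq, abs_div, abs_of_pos hdpos]
    have habs : |sHat (lamhat n) j ^ 2 - sHat (lamhat n) (j+1) ^ 2| ≤ K ^ 2 / n := by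
      rw [abs_sub_le_iff]
      constructor <;> nlinarith
    calc |sHat (lamhat n) j ^ 2 - sHat (lamhat n) (j+1) ^ 2| /
          (sHat (lamhat n) (j+1) ^ 2 + c1 n)
        ≤ (K ^ 2 / n) / (c1 n) := by
          apply div_le_div₀ (by positivity) habs hcpos (by linarith)
      _ = K ^ 2 / ((n : ℝ) * c1 n) := by
          rw [div_div]
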